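/- arXiv:0708.0269 — 2 statements merged into one kernel-verified Lean document; each statement's English description precedes it below -/
import Mathlib

section
/- Let n > 2 and 0 < β < 1. The radial function ψ(r) = (1-β^2)^{(n-2)/4}(cosh r - β)^{1-n/2} on [0,∞) satisfies the equation Δ_r ψ - (n(n-2)/4) ψ = (n(n-2)/4) ψ^{(n+2)/(n-2)}, where Δ_r f = -(sinh r)^{1-n} ∂/∂r [ (sinh r)^{n-1} ∂f/∂r ] is the radial hyperbolic Laplacian. -/
/-- The radial hyperbolic Laplacian (geometer's sign) on `H^n`:
`Δ_r f (r) = -(sinh r)^{1-n} d/dr [(sinh r)^{n-1} f'(r)]`. -/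
noncomputable def radialHypLap (n : ℕ) (f : ℝ → ℝ) (r : ℝ) : ℝ :=
  -(deriv (fun s => Real.sinh s ^ (n - 1) * deriv f s) r) / Real.sinh r ^ (n - 1)

theorem radial_EL_order_one (n : ℕ) (hn : 2 < n) (β : ℝ) (hβ0 : 0 < β) (hβ1 : β < 1)
    (ψ : ℝ → ℝ)
    (hψ : ψ = fun r => (1 - β ^ 2) ^ (((n : ℝ) - 2) / 4) *
      (Real.cosh r - β) ^ (1 - (n : ℝ) / 2)) :
    ∀ r > (0 : ℝ),
      radialHypLap n ψ r - ((n : ℝ) * ((n : ℝ) - 2) / 4) * ψ r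
        = ((n : ℝ) * ((n : ℝ) - 2) / 4) * ψ r ^ (((n : ℝ) + 2) / ((n : ℝ) - 2)) := by
  obtain ⟨m, rfl⟩ : ∃ m, n = m + 3 := ⟨n - 3, by omega⟩
  intro r hr
  set N : ℝ := ((m + 3 : ℕ) : ℝ) with hNdef
  have hN3 : N = (m : ℝ) + 3 := by push_cast [hNdef]; ring
  set p : ℝ := 1 - N / 2 with hp
  set C : ℝ := (1 - β ^ 2) ^ ((N - 2) / 4) with hC
  have hD : (0 : ℝ) < 1 - β ^ 2 := by nlinarith
  have hCpos : 0 < C := Real.rpow_pos_of_pos hD _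
  have hapos : ∀ s : ℝ, 0 < Real.cosh s - β := fun s => by
    have := Real.one_le_cosh s; linarith
  set a : ℝ := Real.cosh r - β with ha
  have ha0 : 0 < a := hapos r
  have hs0 : 0 < Real.sinh r := Real.sinh_pos_iff.2 hr
  set s : ℝ := Real.sinh r with hsdef
  -- derivative of ψ everywhere
  have hderiv : deriv ψ = fun t => C * (Real.sinh t * p * (Real.cosh t - β) ^ (p - 1)) := by
    funext t
    have h1 : HasDerivAt (fun t => Real.cosh t - β) (Real.sinh t) t :=
      (Real.hasDerivAt_cosh t).sub_const β
    have h2 : HasDerivAt (fun t => (Real.cosh t - β) ^ p)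
        (Real.sinh t * p * (Real.cosh t - β) ^ (p - 1)) t :=
      h1.rpow_const (Or.inl (hapos t).ne')
    have h3 := h2.const_mul C
    rw [hψ]
    simpa [mul_assoc] using h3.deriv
  -- the inner function
  have hfun : (fun t => Real.sinh t ^ (m + 3 - 1) * deriv ψ t)
      = fun t => (C * p) * (Real.sinh t ^ (m + 3) * (Real.cosh t - β) ^ (p - 1)) := by
    funext t
    rw [hderiv]
    show Real.sinh t ^ (m + 2) * _ = _
    rw [pow_succ (Real.sinh t) (m + 2)]
    ring
  have h1 : HasDerivAt (fun t => Real.sinh t ^ (m + 3))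
      ((((m : ℝ) + 3)) * Real.sinh r ^ (m + 2) * Real.cosh r) r := by
    have := (Real.hasDerivAt_sinh r).fun_pow (m + 3)
    simpa using this
  have h2 : HasDerivAt (fun t => (Real.cosh t - β) ^ (p - 1))
      (Real.sinh r * (p - 1) * a ^ (p - 1 - 1)) r :=
    ((Real.hasDerivAt_cosh r).sub_const β).rpow_const (Or.inl ha0.ne')
  have h3 : HasDerivAt
      (fun t => (C * p) * (Real.sinh t ^ (m + 3) * (Real.cosh t - β) ^ (p - 1)))
      ((C * p) * ((((m : ℝ) + 3)) * s ^ (m + 2) * Real.cosh r * a ^ (p - 1)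
        + s ^ (m + 3) * (s * (p - 1) * a ^ (p - 1 - 1)))) r := (h1.mul h2).const_mul (C * p)
  have hp2 : p - 1 - 1 = p - 2 := by ring
  rw [hp2] at h3
  have hΔ : radialHypLap (m + 3) ψ r
      = -(C * p) * (((m : ℝ) + 3) * Real.cosh r * a ^ (p - 1)
          + (Real.cosh r ^ 2 - 1) * (p - 1) * a ^ (p - 2)) := by
    unfold radialHypLap
    rw [hfun, h3.deriv]
    rw [div_eq_iff (by positivity : Real.sinh r ^ (m + 3 - 1) ≠ 0)]
    show _ = _ * s ^ (m + 2)
    rw [← Real.sinh_sq r]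
    show -((C * p) * ((((m : ℝ) + 3)) * s ^ (m + 2) * Real.cosh r * a ^ (p - 1)
        + s ^ (m + 3) * (s * (p - 1) * a ^ (p - 2)))) = _
    ring
  -- rpow bookkeeping
  have hA1 : a ^ (p - 1) = a ^ (p - 2) * a := by
    rw [show p - 1 = (p - 2) + 1 by ring, Real.rpow_add_one ha0.ne']
  have hA2 : a ^ p = a ^ (p - 2) * a ^ (2 : ℕ) := by
    rw [← Real.rpow_two, ← Real.rpow_add ha0]
    congr 1; ring
  have hn2 : N - 2 ≠ 0 := by
    have : (0:ℝ) ≤ (m:ℝ) := Nat.cast_nonneg m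
    rw [hN3]; intro h; linarith
  have hq : p * ((N + 2) / (N - 2)) = p - 2 := by
    rw [hp]; field_simp; ring
  have hCq : C ^ ((N + 2) / (N - 2)) = C * (1 - β ^ 2) := by
    rw [hC, ← Real.rpow_mul hD.le,
      show (N - 2) / 4 * ((N + 2) / (N - 2)) = (N - 2) / 4 + 1 by field_simp; ring,
      Real.rpow_add hD, Real.rpow_one]
  have hRHS : (C * a ^ p) ^ ((N + 2) / (N - 2))
      = C * (1 - β ^ 2) * a ^ (p - 2) := by
    rw [Real.mul_rpow hCpos.le (Real.rpow_nonneg ha0.le _), hCq,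
      ← Real.rpow_mul ha0.le, hq]
  have hψr : ψ r = C * a ^ p := by rw [hψ]
  have hcosh : Real.cosh r = a + β := by rw [ha]; ring
  rw [hΔ, hψr, hRHS, hA1, hA2, hcosh, hp, hN3]
  ring
end

section
/- Let n > 4 and 0 < β < 1, and let ψ(r) = (1-β^2)^{(n-4)/4}(cosh r - β)^{2-n/2}. Then ψ satisfies Δ_r^2 ψ - ((n^2-2n-4)/2) Δ_r ψ + (n(n-4)(n^2-4)/16) ψ = (n(n-4)(n^2-4)/16) ψ^{(n+4)/(n-4)} for all r > 0. -/
/-- The result of applying the radial hyperbolic Laplacian to `(cosh r - β)^q`. -/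
noncomputable def Lcoef (n : ℕ) (β q r : ℝ) : ℝ :=
  -q * (((n : ℝ) + q - 1) * (Real.cosh r - β) ^ q
    + β * ((n : ℝ) + 2 * q - 2) * (Real.cosh r - β) ^ (q - 1)
    + (q - 1) * (β ^ 2 - 1) * (Real.cosh r - β) ^ (q - 2))

private lemma cosh_sub_pos {β : ℝ} (hβ : β < 1) (r : ℝ) : 0 < Real.cosh r - β :=
  sub_pos.2 (lt_of_lt_of_le hβ (Real.one_le_cosh r))

private lemma hasDerivAt_term {β : ℝ} (hβ : β < 1) (c q r : ℝ) :
    HasDerivAt (fun s => c * (Real.cosh s - β) ^ q)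
      (c * q * (Real.cosh r - β) ^ (q - 1) * Real.sinh r) r := by
  have h := (((Real.hasDerivAt_cosh r).sub_const β).rpow_const
      (p := q) (Or.inl (ne_of_gt (cosh_sub_pos hβ r)))).const_mul c
  refine h.congr_deriv ?_
  ring

private lemma hasDerivAt_comb {β : ℝ} (hβ : β < 1) (c0 c1 c2 q r : ℝ) :
    HasDerivAt (fun s => c0 * (Real.cosh s - β) ^ q + c1 * (Real.cosh s - β) ^ (q - 1)
        + c2 * (Real.cosh s - β) ^ (q - 2))
      ((c0 * q * (Real.cosh r - β) ^ (q - 1) + c1 * (q - 1) * (Real.cosh r - β) ^ (q - 2)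
        + c2 * (q - 2) * (Real.cosh r - β) ^ (q - 3)) * Real.sinh r) r := by
  have h := ((hasDerivAt_term hβ c0 q r).add (hasDerivAt_term hβ c1 (q - 1) r)).add
    (hasDerivAt_term hβ c2 (q - 2) r)
  rw [show q - 1 - 1 = q - 2 by ring, show q - 2 - 1 = q - 3 by ring] at h
  refine h.congr_deriv ?_
  ring

private lemma deriv_comb {β : ℝ} (hβ : β < 1) (c0 c1 c2 q : ℝ) :
    deriv (fun s => c0 * (Real.cosh s - β) ^ q + c1 * (Real.cosh s - β) ^ (q - 1)
        + c2 * (Real.cosh s - β) ^ (q - 2))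
      = fun r => (c0 * q * (Real.cosh r - β) ^ (q - 1)
          + c1 * (q - 1) * (Real.cosh r - β) ^ (q - 2)
          + c2 * (q - 2) * (Real.cosh r - β) ^ (q - 3)) * Real.sinh r :=
  funext fun r => (hasDerivAt_comb hβ c0 c1 c2 q r).deriv

private lemma lap_comb (n : ℕ) (hn : 1 ≤ n) {β : ℝ} (hβ : β < 1) (c0 c1 c2 q : ℝ)
    {r : ℝ} (hr : 0 < r) :
    radialHypLap n (fun s => c0 * (Real.cosh s - β) ^ q + c1 * (Real.cosh s - β) ^ (q - 1)
        + c2 * (Real.cosh s - β) ^ (q - 2)) r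
      = c0 * Lcoef n β q r + c1 * Lcoef n β (q - 1) r + c2 * Lcoef n β (q - 2) r := by
  have hS : (0 : ℝ) < Real.sinh r := Real.sinh_pos_iff.2 hr
  have hu : (0 : ℝ) < Real.cosh r - β := cosh_sub_pos hβ r
  unfold radialHypLap
  simp only [deriv_comb hβ c0 c1 c2 q]
  -- rewrite sinh^(n-1) * (D s * sinh s) as sinh^n * D s
  have hfun : (fun s => Real.sinh s ^ (n - 1) *
        ((c0 * q * (Real.cosh s - β) ^ (q - 1) + c1 * (q - 1) * (Real.cosh s - β) ^ (q - 2)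
          + c2 * (q - 2) * (Real.cosh s - β) ^ (q - 3)) * Real.sinh s))
      = fun s => Real.sinh s ^ n *
          (c0 * q * (Real.cosh s - β) ^ (q - 1) + c1 * (q - 1) * (Real.cosh s - β) ^ (q - 2)
            + c2 * (q - 2) * (Real.cosh s - β) ^ (q - 3)) := by
    funext s
    rw [show Real.sinh s ^ n = Real.sinh s ^ (n - 1) * Real.sinh s by
      rw [← pow_succ, Nat.sub_add_cancel hn]]
    ring
  rw [hfun]
  -- derivative of the inner function
  have hD := hasDerivAt_comb hβ (c0 * q) (c1 * (q - 1)) (c2 * (q - 2)) (q - 1) r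
  rw [show q - 1 - 1 = q - 2 by ring, show q - 1 - 2 = q - 3 by ring,
      show q - 1 - 3 = q - 4 by ring] at hD
  have hSpow : HasDerivAt (fun s => Real.sinh s ^ n)
      ((n : ℝ) * Real.sinh r ^ (n - 1) * Real.cosh r) r := (Real.hasDerivAt_sinh r).pow n
  have hprod := hSpow.mul hD
  erw [hprod.deriv]
  -- now cancel sinh^(n-1)
  set D : ℝ := c0 * q * (Real.cosh r - β) ^ (q - 1) + c1 * (q - 1) * (Real.cosh r - β) ^ (q - 2)
      + c2 * (q - 2) * (Real.cosh r - β) ^ (q - 3) with hDdef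
  set E : ℝ := c0 * q * (q - 1) * (Real.cosh r - β) ^ (q - 2)
      + c1 * (q - 1) * (q - 2) * (Real.cosh r - β) ^ (q - 3)
      + c2 * (q - 2) * (q - 3) * (Real.cosh r - β) ^ (q - 4) with hEdef
  have hSn : Real.sinh r ^ n = Real.sinh r ^ (n - 1) * Real.sinh r := by
    rw [← pow_succ, Nat.sub_add_cancel hn]
  have hkey : (n : ℝ) * Real.sinh r ^ (n - 1) * Real.cosh r * D
      + Real.sinh r ^ n * (E * Real.sinh r)
      = Real.sinh r ^ (n - 1) * ((n : ℝ) * Real.cosh r * D + Real.sinh r ^ 2 * E) := by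
    rw [hSn]; ring
  rw [hkey, neg_div, mul_div_cancel_left₀ _ (pow_ne_zero _ hS.ne')]
  -- algebraic identity
  have hsq : Real.sinh r ^ 2 = Real.cosh r ^ 2 - 1 := Real.sinh_sq r
  rw [hsq, hDdef, hEdef]
  set u : ℝ := Real.cosh r - β with hudef
  have hc : Real.cosh r = u + β := by rw [hudef]; ring
  rw [hc]
  have e0 : u ^ q = u ^ (q - 4) * u ^ (4 : ℕ) := by
    rw [← Real.rpow_natCast u 4, ← Real.rpow_add hu]; congr 1; push_cast; ring
  have e1 : u ^ (q - 1) = u ^ (q - 4) * u ^ (3 : ℕ) := by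
    rw [← Real.rpow_natCast u 3, ← Real.rpow_add hu]; congr 1; push_cast; ring
  have e2 : u ^ (q - 2) = u ^ (q - 4) * u ^ (2 : ℕ) := by
    rw [← Real.rpow_natCast u 2, ← Real.rpow_add hu]; congr 1; push_cast; ring
  have e3 : u ^ (q - 3) = u ^ (q - 4) * u ^ (1 : ℕ) := by
    rw [← Real.rpow_natCast u 1, ← Real.rpow_add hu]; congr 1; push_cast; ring
  unfold Lcoef
  rw [show q - 1 - 1 = q - 2 by ring, show q - 1 - 2 = q - 3 by ring,
      show q - 2 - 1 = q - 3 by ring, show q - 2 - 2 = q - 4 by ring, ← hudef]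
  rw [e0, e1, e2, e3]
  ring

private lemma lap_congr (n : ℕ) (f g : ℝ → ℝ) (h : ∀ s, 0 < s → f s = g s)
    {r : ℝ} (hr : 0 < r) : radialHypLap n f r = radialHypLap n g r := by
  unfold radialHypLap
  have hd : ∀ s ∈ Set.Ioi (0 : ℝ), deriv f s = deriv g s := by
    intro s hs
    exact Filter.EventuallyEq.deriv_eq
      (Filter.eventuallyEq_of_mem (isOpen_Ioi.mem_nhds hs) fun t ht => h t ht)
  have heq : (fun s => Real.sinh s ^ (n - 1) * deriv f s) =ᶠ[nhds r]
      (fun s => Real.sinh s ^ (n - 1) * deriv g s) :=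
    Filter.eventuallyEq_of_mem (isOpen_Ioi.mem_nhds hr) fun s hs => by rw [hd s hs]
  rw [heq.deriv_eq]

theorem radial_EL_order_two (n : ℕ) (hn : 4 < n) (β : ℝ) (hβ0 : 0 < β) (hβ1 : β < 1)
    (ψ : ℝ → ℝ)
    (hψ : ψ = fun r => (1 - β ^ 2) ^ (((n : ℝ) - 4) / 4) *
      (Real.cosh r - β) ^ (2 - (n : ℝ) / 2)) :
    ∀ r > (0 : ℝ),
      radialHypLap n (radialHypLap n ψ) r
        - (((n : ℝ) ^ 2 - 2 * n - 4) / 2) * radialHypLap n ψ r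
        + ((n : ℝ) * ((n : ℝ) - 4) * ((n : ℝ) ^ 2 - 4) / 16) * ψ r
      = ((n : ℝ) * ((n : ℝ) - 4) * ((n : ℝ) ^ 2 - 4) / 16) *
          ψ r ^ (((n : ℝ) + 4) / ((n : ℝ) - 4)) := by
  intro r hr
  have hn1 : 1 ≤ n := by omega
  have hn4 : (4 : ℝ) < (n : ℝ) := by exact_mod_cast hn
  have hn4' : (n : ℝ) - 4 ≠ 0 := by linarith
  have hb2 : (0 : ℝ) < 1 - β ^ 2 := by nlinarith
  set p : ℝ := 2 - (n : ℝ) / 2 with hp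
  set C : ℝ := (1 - β ^ 2) ^ (((n : ℝ) - 4) / 4) with hCdef
  have hC : 0 < C := Real.rpow_pos_of_pos hb2 _
  have hψ' : ψ = fun s => C * (Real.cosh s - β) ^ p + 0 * (Real.cosh s - β) ^ (p - 1)
      + 0 * (Real.cosh s - β) ^ (p - 2) := by
    rw [hψ]; funext s; ring
  -- first Laplacian
  have h1 : ∀ s, 0 < s → radialHypLap n ψ s = C * Lcoef n β p s := by
    intro s hs
    rw [hψ', lap_comb n hn1 hβ1 C 0 0 p hs]
    ring
  -- express the first Laplacian as a three-term combination
  set d0 : ℝ := -(C * p * ((n : ℝ) + p - 1)) with hd0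
  set d1 : ℝ := -(C * p * (β * ((n : ℝ) + 2 * p - 2))) with hd1
  set d2 : ℝ := -(C * p * ((p - 1) * (β ^ 2 - 1))) with hd2
  have h1' : ∀ s, 0 < s → radialHypLap n ψ s
      = d0 * (Real.cosh s - β) ^ p + d1 * (Real.cosh s - β) ^ (p - 1)
        + d2 * (Real.cosh s - β) ^ (p - 2) := by
    intro s hs
    rw [h1 s hs]; unfold Lcoef; rw [hd0, hd1, hd2]; ring
  have h2 : radialHypLap n (radialHypLap n ψ) r
      = d0 * Lcoef n β p r + d1 * Lcoef n β (p - 1) r + d2 * Lcoef n β (p - 2) r := by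
    rw [lap_congr n _ (fun s => d0 * (Real.cosh s - β) ^ p + d1 * (Real.cosh s - β) ^ (p - 1)
        + d2 * (Real.cosh s - β) ^ (p - 2)) h1' hr]
    exact lap_comb n hn1 hβ1 d0 d1 d2 p hr
  rw [h2, h1 r hr, hψ]
  simp only
  -- rewrite the right-hand side power
  set u : ℝ := Real.cosh r - β with hudef
  have hu : 0 < u := cosh_sub_pos hβ1 r
  have hrpow : (C * u ^ p) ^ (((n : ℝ) + 4) / ((n : ℝ) - 4))
      = C * (1 - β ^ 2) ^ 2 * u ^ (p - 4) := by
    rw [Real.mul_rpow hC.le (Real.rpow_pos_of_pos hu p).le]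
    rw [hCdef, ← Real.rpow_mul hb2.le, ← Real.rpow_mul hu.le]
    have h1 : ((n : ℝ) - 4) / 4 * (((n : ℝ) + 4) / ((n : ℝ) - 4))
        = ((n : ℝ) - 4) / 4 + 2 := by field_simp; ring
    have h2 : p * (((n : ℝ) + 4) / ((n : ℝ) - 4)) = p - 4 := by
      rw [hp]; field_simp; ring
    rw [h1, h2, Real.rpow_add hb2, Real.rpow_two]
  rw [hrpow]
  -- final algebra
  unfold Lcoef
  rw [show p - 1 - 1 = p - 2 by ring, show p - 1 - 2 = p - 3 by ring,
      show p - 2 - 1 = p - 3 by ring, show p - 2 - 2 = p - 4 by ring, ← hudef]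
  have e0 : u ^ p = u ^ (p - 4) * u ^ (4 : ℕ) := by
    rw [← Real.rpow_natCast u 4, ← Real.rpow_add hu]; congr 1; push_cast; ring
  have e1 : u ^ (p - 1) = u ^ (p - 4) * u ^ (3 : ℕ) := by
    rw [← Real.rpow_natCast u 3, ← Real.rpow_add hu]; congr 1; push_cast; ring
  have e2 : u ^ (p - 2) = u ^ (p - 4) * u ^ (2 : ℕ) := by
    rw [← Real.rpow_natCast u 2, ← Real.rpow_add hu]; congr 1; push_cast; ring
  have e3 : u ^ (p - 3) = u ^ (p - 4) * u ^ (1 : ℕ) := by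
    rw [← Real.rpow_natCast u 1, ← Real.rpow_add hu]; congr 1; push_cast; ring
  rw [e0, e1, e2, e3, hd0, hd1, hd2, hp]
  ring
end
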